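/- Let f_c(r) = r^m + 2cα·r^{-n} - 1 for r > 0, where m, n ∈ ℕ with m > n ≥ 1 and α > 0. There exists c₀ > 0 such that for all 0 < c < c₀ the function f_c has exactly two positive real zeros, and for all c > c₀ the function f_c has no positive real zeros. -/

import Mathlib

theorem zero_count_transition_neg_k (m n : ℕ) (hn : 1 ≤ n) (hmn : n < m) (α : ℝ) (hα : 0 < α) :
    ∃ c₀ : ℝ, 0 < c₀ ∧
      (∀ c : ℝ, 0 < c → c < c₀ →
        {r : ℝ | 0 < r ∧ r ^ m + 2 * c * α * r ^ (-(n : ℤ)) - 1 = 0}.ncard = 2) ∧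
      (∀ c : ℝ, c₀ < c →
        {r : ℝ | 0 < r ∧ r ^ m + 2 * c * α * r ^ (-(n : ℤ)) - 1 = 0} = ∅) := by
  have hm : 0 < m := lt_of_le_of_lt (Nat.zero_le n) hmn
  set h : ℝ → ℝ := fun x => x ^ n - x ^ (m + n) with hh
  -- equivalence
  have hequiv : ∀ (T r : ℝ), 0 < r →
      (r ^ m + T * r ^ (-(n : ℤ)) - 1 = 0 ↔ h r = T) := by
    intro T r hr
    have hrn : r ^ n ≠ 0 := pow_ne_zero _ hr.ne'
    rw [zpow_neg, zpow_natCast]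
    constructor <;> intro hx
    · field_simp at hx; simp only [hh]; nlinarith [pow_add r m n]
    · simp only [hh] at hx; field_simp; nlinarith [pow_add r m n]
  -- the critical point
  set x : ℝ := (n : ℝ) / (m + n) with hx
  have hx0 : 0 < x := by
    apply div_pos (by exact_mod_cast hn) (by positivity)
  have hx1 : x < 1 := by
    rw [div_lt_one (by positivity)]
    exact_mod_cast Nat.lt_add_of_pos_left hm
  set s : ℝ := x ^ ((1 : ℝ) / m) with hs
  have hs0 : 0 < s := Real.rpow_pos_of_pos hx0 _
  have hs1 : s < 1 := Real.rpow_lt_one hx0.le hx1 (by positivity)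
  have hsm : s ^ m = x := by
    rw [hs, ← Real.rpow_natCast (x ^ ((1:ℝ)/m)) m, ← Real.rpow_mul hx0.le,
      one_div_mul_cancel (by exact_mod_cast hm.ne' : (m:ℝ) ≠ 0), Real.rpow_one]
  have hcont : Continuous h := by continuity
  have hderiv : ∀ r : ℝ, deriv h r = n * r ^ (n - 1) - (m + n) * r ^ (m + n - 1) := by
    intro r
    have : DifferentiableAt ℝ (fun x : ℝ => x ^ n) r := differentiableAt_pow n
    simp [hh, deriv_sub this (differentiableAt_pow (m + n)), deriv_pow]
  have hdiff : ∀ r : ℝ, DifferentiableAt ℝ h r := fun r =>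
    (differentiableAt_pow n).sub (differentiableAt_pow (m + n))
  have hsplit : m + n - 1 = m + (n - 1) := by omega
  -- strict mono on [0, s]
  have hmono : StrictMonoOn h (Set.Icc 0 s) := by
    apply strictMonoOn_of_deriv_pos (convex_Icc 0 s) hcont.continuousOn
    intro r hr
    rw [interior_Icc] at hr
    rw [hderiv]
    have h1 : r ^ m < x := by
      rw [← hsm]; exact pow_lt_pow_left₀ hr.2 hr.1.le hm.ne'
    have h2 : (0:ℝ) < r ^ (n - 1) := pow_pos hr.1 _
    have h3 : r ^ (m + n - 1) = r ^ m * r ^ (n - 1) := by rw [hsplit, pow_add]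
    rw [h3]
    have hN : (0:ℝ) < (m:ℝ) + n := by positivity
    have h4 : ((m:ℝ) + n) * r ^ m < n := by
      rw [hx] at h1
      have := (lt_div_iff₀ hN).mp h1
      linarith
    nlinarith
  -- strict anti on [s, ∞)
  have hanti : StrictAntiOn h (Set.Ici s) := by
    apply strictAntiOn_of_deriv_neg (convex_Ici s) hcont.continuousOn
    intro r hr
    rw [interior_Ici] at hr
    have hr0 : 0 < r := hs0.trans hr
    rw [hderiv]
    have h1 : x < r ^ m := by
      rw [← hsm]; exact pow_lt_pow_left₀ hr hs0.le hm.ne'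
    have h2 : (0:ℝ) < r ^ (n - 1) := pow_pos hr0 _
    have h3 : r ^ (m + n - 1) = r ^ m * r ^ (n - 1) := by rw [hsplit, pow_add]
    rw [h3]
    have hN : (0:ℝ) < (m:ℝ) + n := by positivity
    have h4 : (n:ℝ) < ((m:ℝ) + n) * r ^ m := by
      rw [hx] at h1
      have := (div_lt_iff₀ hN).mp h1
      linarith
    nlinarith
  set M : ℝ := h s with hM
  have hglobal : ∀ r : ℝ, 0 < r → h r ≤ M := by
    intro r hr
    rcases lt_or_ge r s with hrs | hrs
    · exact (hmono ⟨hr.le, hrs.le⟩ ⟨hs0.le, le_refl s⟩ hrs).le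
    · rcases eq_or_lt_of_le hrs with rfl | hrs
      · exact le_refl _
      · exact (hanti (le_refl s) hrs.le hrs).le
  have hM0 : 0 < M := by
    have h1 : 0 < s / 2 := by positivity
    have h2 : s / 2 < s := by linarith
    have hpos : 0 < h (s / 2) := by
      have : (s/2) ^ (m+n) < (s/2) ^ n :=
        pow_lt_pow_right_of_lt_one₀ h1 (by linarith) (by omega)
      simp only [hh]; linarith
    have h3 : h (s/2) < M := hmono ⟨h1.le, h2.le⟩ ⟨hs0.le, le_refl s⟩ h2
    exact hpos.trans h3
  refine ⟨M / (2 * α), by positivity, ?_, ?_⟩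
  · -- two zeros
    intro c hc0 hcc
    set t : ℝ := 2 * c * α with ht
    have ht0 : 0 < t := by positivity
    have htM : t < M := by
      have hd := (lt_div_iff₀ (by positivity : (0:ℝ) < 2 * α)).mp hcc
      rw [ht]; nlinarith
    -- small point
    set ε : ℝ := min (s / 2) (t / 2) with hε
    have hε0 : 0 < ε := lt_min (by positivity) (by positivity)
    have hεs : ε < s := lt_of_le_of_lt (min_le_left _ _) (by linarith)
    have hε1 : ε ≤ 1 := le_trans (min_le_left _ _) (by linarith)
    have hεval : h ε < t := by
      have h1 : ε ^ n ≤ ε := pow_le_of_le_one hε0.le hε1 (by omega)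
      have h2 : 0 < ε ^ (m + n) := pow_pos hε0 _
      have h3 : ε ≤ t / 2 := min_le_right _ _
      simp only [hh]; linarith
    have hIVT1 := intermediate_value_Ioo hεs.le (hcont.continuousOn (s := Set.Icc ε s))
    obtain ⟨a, ha, hha⟩ := hIVT1 ⟨hεval, htM⟩
    have ha0 : 0 < a := hε0.trans ha.1
    -- big point
    have hs2 : s < 2 := by linarith
    have h2val : h 2 < t := by
      have : (2:ℝ) ^ n < 2 ^ (m + n) := pow_lt_pow_right₀ one_lt_two (by omega)
      simp only [hh]; linarith
    have hIVT2 := intermediate_value_Ioo' hs2.le (hcont.continuousOn (s := Set.Icc s 2))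
    obtain ⟨b, hb, hhb⟩ := hIVT2 ⟨h2val, htM⟩
    have hb0 : 0 < b := hs0.trans hb.1
    have hab : a ≠ b := by
      intro heq; rw [heq] at ha; exact absurd (ha.2.trans hb.1) (lt_irrefl b)
    have hset : {r : ℝ | 0 < r ∧ r ^ m + 2 * c * α * r ^ (-(n:ℤ)) - 1 = 0} = {a, b} := by
      ext r
      simp only [Set.mem_setOf_eq, Set.mem_insert_iff, Set.mem_singleton_iff]
      constructor
      · rintro ⟨hr, heq⟩
        have hhr : h r = t := (hequiv _ r hr).mp heq
        rcases lt_trichotomy r s with hrs | hrs | hrs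
        · left
          exact hmono.injOn ⟨hr.le, hrs.le⟩ ⟨hε0.le.trans ha.1.le, ha.2.le⟩
            (hha ▸ hhr)
        · exfalso; rw [hrs] at hhr; rw [← hhr] at htM; exact lt_irrefl _ htM
        · right
          exact hanti.injOn hrs.le hb.1.le (hhb ▸ hhr)
      · rintro (rfl | rfl)
        · exact ⟨ha0, (hequiv _ r ha0).mpr hha⟩
        · exact ⟨hb0, (hequiv _ r hb0).mpr hhb⟩
    rw [hset]
    exact Set.ncard_pair hab
  · -- no zeros
    intro c hcc
    ext r
    simp only [Set.mem_setOf_eq, Set.mem_empty_iff_false, iff_false, not_and]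
    intro hr heq
    have hhr : h r = 2 * c * α := (hequiv _ r hr).mp heq
    have h1 : h r ≤ M := hglobal r hr
    have h2 : M < 2 * c * α := by
      have := (div_lt_iff₀ (by positivity : (0:ℝ) < 2 * α)).mp hcc
      nlinarith
    linarith
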